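/- Let 𝔽 be ℝ or ℂ, A ∈ 𝔽^{m×d}, D ∈ 𝔽^{d×n}. If the matrix A D satisfies the null space property of order s, then there exists a constant c > 0 such that for every v ∈ ker(A D) and every index set T with |T| ≤ s, ‖v_{T^c}‖₁ − ‖v_T‖₁ ≥ c‖v‖₂. Consequently (taking u = 0 and using ‖D v‖₂ ≤ ‖D‖₂‖v‖₂), A satisfies the strong D-null space property of order s. -/

import Mathlib

open scoped BigOperators

section Defs

variable {𝕜 : Type*}

/-- ℓ¹ norm of a finitely-indexed vector. -/
noncomputable def norm1 [RCLike 𝕜] {ι : Type*} [Fintype ι] (x : ι → 𝕜) : ℝ :=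
  ∑ i, ‖x i‖

/-- ℓ² norm of a finitely-indexed vector. -/
noncomputable def norm2 [RCLike 𝕜] {ι : Type*} [Fintype ι] (x : ι → 𝕜) : ℝ :=
  Real.sqrt (∑ i, ‖x i‖ ^ 2)

/-- Restriction of a vector to an index set `T` (zero outside `T`). -/
def restr [Zero 𝕜] {ι : Type*} [DecidableEq ι] (T : Finset ι) (x : ι → 𝕜) : ι → 𝕜 :=
  fun i => if i ∈ T then x i else 0

/-- `x` has at most `s` nonzero entries. -/
def sparse [Zero 𝕜] {ι : Type*} (s : ℕ) (x : ι → 𝕜) : Prop :=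
  {i | x i ≠ 0}.ncard ≤ s

/-- Null space property of order `s`. -/
def NSP [RCLike 𝕜] {m : ℕ} {ι : Type*} [Fintype ι] [DecidableEq ι]
    (M : Matrix (Fin m) ι 𝕜) (s : ℕ) : Prop :=
  ∀ v : ι → 𝕜, M.mulVec v = 0 → v ≠ 0 →
    ∀ T : Finset ι, T.card ≤ s → norm1 (restr T v) < norm1 (restr Tᶜ v)

/-- `D`-null space property of order `s`. -/
def DNSP [RCLike 𝕜] {m d : ℕ} {ι : Type*} [Fintype ι] [DecidableEq ι]
    (A : Matrix (Fin m) (Fin d) 𝕜) (D : Matrix (Fin d) ι 𝕜) (s : ℕ) : Prop :=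
  ∀ T : Finset ι, T.card ≤ s →
    ∀ v : ι → 𝕜, A.mulVec (D.mulVec v) = 0 → D.mulVec v ≠ 0 →
      ∃ u : ι → 𝕜, D.mulVec u = 0 ∧ norm1 (restr T v + u) < norm1 (restr Tᶜ v)

/-- Strong `D`-null space property of order `s` with constant `c`. -/
def SNSPc [RCLike 𝕜] {m d : ℕ} {ι : Type*} [Fintype ι] [DecidableEq ι]
    (A : Matrix (Fin m) (Fin d) 𝕜) (D : Matrix (Fin d) ι 𝕜) (s : ℕ) (c : ℝ) : Prop :=
  ∀ v : ι → 𝕜, A.mulVec (D.mulVec v) = 0 →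
    ∀ T : Finset ι, T.card ≤ s →
      ∃ u : ι → 𝕜, D.mulVec u = 0 ∧
        c * norm2 (D.mulVec v) ≤ norm1 (restr Tᶜ v) - norm1 (restr T v + u)

/-- Smallest positive singular value of a matrix: the infimum of the set of positive `σ`
such that `σ²` is an eigenvalue of `Mᴴ M`. -/
noncomputable def nuSV [RCLike 𝕜] {κ ι : Type*} [Fintype κ] [Fintype ι]
    (M : Matrix κ ι 𝕜) : ℝ :=
  sInf {σ : ℝ | 0 < σ ∧ ∃ v : ι → 𝕜, v ≠ 0 ∧ (M.conjTranspose * M).mulVec v = ((σ : 𝕜) ^ 2) • v}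

/-- ℓ¹ error of the best `s`-term approximation. -/
noncomputable def sigmaS [RCLike 𝕜] {ι : Type*} [Fintype ι] (s : ℕ) (x : ι → 𝕜) : ℝ :=
  sInf {r : ℝ | ∃ v : ι → 𝕜, sparse s v ∧ r = norm1 (x - v)}

/-- Spectral norm (ℓ² → ℓ² operator norm). -/
noncomputable def specNorm [RCLike 𝕜] {m d : ℕ} (A : Matrix (Fin m) (Fin d) 𝕜) : ℝ :=
  sSup {r : ℝ | ∃ x : Fin d → 𝕜, norm2 x ≤ 1 ∧ r = norm2 (A.mulVec x)}

/-- ℓ¹ → ℓ² operator norm: the maximal ℓ² norm of a column. -/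
noncomputable def norm12 [RCLike 𝕜] {d : ℕ} {ι : Type*} [Fintype ι]
    (M : Matrix (Fin d) ι 𝕜) : ℝ :=
  sSup {r : ℝ | ∃ j : ι, r = norm2 (fun i => M i j)}

end Defs

section Aux

variable {𝕜 : Type*} [RCLike 𝕜] {ι : Type*} [Fintype ι]

lemma norm1_smul (a : 𝕜) (x : ι → 𝕜) : norm1 (a • x) = ‖a‖ * norm1 x := by
  simp [norm1, Finset.mul_sum, norm_smul]

lemma norm2_smul (a : 𝕜) (x : ι → 𝕜) : norm2 (a • x) = ‖a‖ * norm2 x := by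
  simp only [norm2, Pi.smul_apply, norm_smul, mul_pow]
  rw [← Finset.mul_sum, Real.sqrt_mul (by positivity), Real.sqrt_sq (norm_nonneg a)]

lemma norm2_nonneg (x : ι → 𝕜) : 0 ≤ norm2 x := Real.sqrt_nonneg _

lemma norm2_zero : norm2 (0 : ι → 𝕜) = 0 := by simp [norm2]

lemma norm2_pos {x : ι → 𝕜} (hx : x ≠ 0) : 0 < norm2 x := by
  obtain ⟨i, hi⟩ := Function.ne_iff.mp hx
  apply Real.sqrt_pos.mpr
  have h1 : 0 < ‖x i‖ ^ 2 := pow_pos (norm_pos_iff.mpr hi) 2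
  have h2 : ‖x i‖ ^ 2 ≤ ∑ j, ‖x j‖ ^ 2 :=
    Finset.single_le_sum (f := fun j => ‖x j‖ ^ 2) (fun j _ => by positivity) (Finset.mem_univ i)
  linarith

lemma restr_zero [DecidableEq ι] (T : Finset ι) : restr T (0 : ι → 𝕜) = 0 := by
  funext i
  simp [restr]

lemma norm1_zero : norm1 (0 : ι → 𝕜) = 0 := by simp [norm1]

lemma restr_smul [DecidableEq ι] (T : Finset ι) (a : 𝕜) (x : ι → 𝕜) :
    restr T (a • x) = a • restr T x := by
  funext i
  by_cases h : i ∈ T <;> simp [restr, h]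

lemma continuous_norm1 : Continuous (norm1 : (ι → 𝕜) → ℝ) := by
  unfold norm1
  exact continuous_finset_sum _ fun i _ => (continuous_apply i).norm

lemma continuous_norm2 : Continuous (norm2 : (ι → 𝕜) → ℝ) := by
  unfold norm2
  exact Real.continuous_sqrt.comp
    (continuous_finset_sum _ fun i _ => (continuous_apply i).norm.pow 2)

lemma continuous_restr [DecidableEq ι] (T : Finset ι) :
    Continuous (restr T : (ι → 𝕜) → ι → 𝕜) := by
  apply continuous_pi
  intro i
  by_cases h : i ∈ T
  · simpa [restr, h] using continuous_apply (A := fun _ : ι => 𝕜) i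
  · simp only [restr, h, if_false]
    exact continuous_const

lemma continuous_mulVec {m' : ℕ} (M : Matrix (Fin m') ι 𝕜) :
    Continuous M.mulVec := by
  apply continuous_pi
  intro i
  simp only [Matrix.mulVec, dotProduct]
  exact continuous_finset_sum _ fun j _ => continuous_const.mul (continuous_apply j)

lemma entry_le_norm2 (x : ι → 𝕜) (i : ι) : ‖x i‖ ≤ norm2 x := by
  have h2 : ‖x i‖ ^ 2 ≤ ∑ j, ‖x j‖ ^ 2 :=
    Finset.single_le_sum (f := fun j => ‖x j‖ ^ 2) (fun j _ => by positivity) (Finset.mem_univ i)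
  calc ‖x i‖ = Real.sqrt (‖x i‖ ^ 2) := (Real.sqrt_sq (norm_nonneg _)).symm
    _ ≤ norm2 x := Real.sqrt_le_sqrt h2

lemma isCompact_norm2_sphere_inter {P : Set (ι → 𝕜)} (hP : IsClosed P) :
    IsCompact ({x : ι → 𝕜 | norm2 x = 1} ∩ P) := by
  apply Metric.isCompact_of_isClosed_isBounded
  · exact (isClosed_eq continuous_norm2 continuous_const).inter hP
  · apply Bornology.IsBounded.subset (Metric.isBounded_closedBall (x := (0 : ι → 𝕜)) (r := 1))
    rintro x ⟨hx, -⟩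
    simp only [Metric.mem_closedBall, dist_zero_right]
    refine pi_norm_le_iff_of_nonneg zero_le_one |>.mpr fun i => ?_
    calc ‖x i‖ ≤ norm2 x := entry_le_norm2 x i
      _ = 1 := hx

end Aux

/-- if `A D` has `s`-NSP then the null-space inequality holds with a uniform
constant, and consequently `A` satisfies the strong `D`-null space property of order `s`. -/
theorem stmt8 {𝕜 : Type*} [RCLike 𝕜] {m d n s : ℕ}
    (A : Matrix (Fin m) (Fin d) 𝕜) (D : Matrix (Fin d) (Fin n) 𝕜)
    (hNSP : NSP (A * D) s) :
    (∃ c : ℝ, 0 < c ∧ ∀ v : Fin n → 𝕜, (A * D).mulVec v = 0 →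
      ∀ T : Finset (Fin n), T.card ≤ s →
        c * norm2 v ≤ norm1 (restr Tᶜ v) - norm1 (restr T v)) ∧
    (∃ c : ℝ, 0 < c ∧ SNSPc A D s c) := by
  classical
  set M := A * D with hM
  set Sset : Set (Fin n → 𝕜) := {x | norm2 x = 1} ∩ {x | M.mulVec x = 0} with hSset
  by_cases hne : Sset.Nonempty
  · -- kernel nontrivial: compactness argument
    have hclosed : IsClosed {x : Fin n → 𝕜 | M.mulVec x = 0} :=
      isClosed_eq (continuous_mulVec M) continuous_const
    have hcomp : IsCompact Sset := isCompact_norm2_sphere_inter hclosed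
    set 𝒯 : Finset (Finset (Fin n)) := Finset.univ.filter (fun T => T.card ≤ s) with h𝒯def
    have h𝒯ne : 𝒯.Nonempty := ⟨∅, by simp [h𝒯def]⟩
    set g : Finset (Fin n) → (Fin n → 𝕜) → ℝ :=
      fun T v => norm1 (restr Tᶜ v) - norm1 (restr T v) with hg
    have hgcont : ∀ T, Continuous (g T) := fun T =>
      (continuous_norm1.comp (continuous_restr Tᶜ)).sub
        (continuous_norm1.comp (continuous_restr T))
    set cT : Finset (Fin n) → ℝ := fun T => sInf (g T '' Sset) with hcT
    have hbdd : ∀ T, BddBelow (g T '' Sset) := fun T => (hcomp.image (hgcont T)).bddBelow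
    have hle : ∀ T, ∀ v ∈ Sset, cT T ≤ g T v := fun T v hv => csInf_le (hbdd T) ⟨v, hv, rfl⟩
    have hpos : ∀ T ∈ 𝒯, 0 < cT T := by
      intro T hT
      obtain ⟨x, hx, hmin⟩ := hcomp.exists_isMinOn hne (hgcont T).continuousOn
      have hx1 : norm2 x = 1 := hx.1
      have hxk : M.mulVec x = 0 := hx.2
      have hx0 : x ≠ 0 := fun h => by simp [h, norm2_zero] at hx1
      have hTs : T.card ≤ s := by simpa [h𝒯def] using hT
      have hgx : 0 < g T x := sub_pos.mpr (hNSP x hxk hx0 T hTs)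
      have h2 : g T x ≤ cT T :=
        le_csInf ⟨g T x, x, hx, rfl⟩ (by rintro r ⟨y, hy, rfl⟩; exact hmin hy)
      linarith
    set c : ℝ := 𝒯.inf' h𝒯ne cT with hc
    have hcpos : 0 < c := (Finset.lt_inf'_iff h𝒯ne).mpr hpos
    have key : ∀ v : Fin n → 𝕜, M.mulVec v = 0 → ∀ T : Finset (Fin n), T.card ≤ s →
        c * norm2 v ≤ norm1 (restr Tᶜ v) - norm1 (restr T v) := by
      intro v hv T hT
      by_cases h0 : v = 0
      · subst h0
        simp [norm2_zero, restr_zero, norm1_zero]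
      · have hp := norm2_pos h0
        set a : 𝕜 := ((norm2 v : ℝ) : 𝕜)⁻¹ with ha
        have hna : ‖a‖ = (norm2 v)⁻¹ := by
          rw [ha, norm_inv, RCLike.norm_ofReal, abs_of_pos hp]
        have hw : (a • v) ∈ Sset := by
          constructor
          · show norm2 (a • v) = 1
            rw [norm2_smul, hna]
            field_simp
          · show M.mulVec (a • v) = 0
            rw [Matrix.mulVec_smul, hv, smul_zero]
        have hT𝒯 : T ∈ 𝒯 := by simp [h𝒯def, hT]
        have h1 : c ≤ cT T := Finset.inf'_le _ hT𝒯
        have h2 : cT T ≤ g T (a • v) := hle T _ hw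
        have h3 : g T (a • v) = (norm2 v)⁻¹ * (norm1 (restr Tᶜ v) - norm1 (restr T v)) := by
          simp only [hg, restr_smul, norm1_smul, hna, mul_sub]
        have h4 : c ≤ (norm2 v)⁻¹ * (norm1 (restr Tᶜ v) - norm1 (restr T v)) :=
          h1.trans (h2.trans_eq h3)
        have h5 := mul_le_mul_of_nonneg_right h4 hp.le
        calc c * norm2 v ≤ (norm2 v)⁻¹ * (norm1 (restr Tᶜ v) - norm1 (restr T v)) * norm2 v := h5
          _ = norm1 (restr Tᶜ v) - norm1 (restr T v) := by
              field_simp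
    refine ⟨⟨c, hcpos, key⟩, ?_⟩
    -- bound norm2 (D.mulVec v) ≤ K * norm2 v
    have hcompS : IsCompact {x : Fin n → 𝕜 | norm2 x = 1} := by
      have := isCompact_norm2_sphere_inter (ι := Fin n) (𝕜 := 𝕜) isClosed_univ
      simpa using this
    obtain ⟨z, hz⟩ := hne
    have hSne : ({x : Fin n → 𝕜 | norm2 x = 1}).Nonempty := ⟨z, hz.1⟩
    have hhcont : Continuous fun x : Fin n → 𝕜 => norm2 (D.mulVec x) :=
      continuous_norm2.comp (continuous_mulVec D)
    obtain ⟨x0, hx0, hmax⟩ := hcompS.exists_isMaxOn hSne hhcont.continuousOn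
    set K : ℝ := norm2 (D.mulVec x0) with hK
    have hKnn : 0 ≤ K := norm2_nonneg _
    have hbound : ∀ v : Fin n → 𝕜, norm2 (D.mulVec v) ≤ K * norm2 v := by
      intro v
      by_cases h0 : v = 0
      · subst h0
        simp [Matrix.mulVec_zero, norm2_zero]
      · have hp := norm2_pos h0
        set a : 𝕜 := ((norm2 v : ℝ) : 𝕜)⁻¹ with ha
        have hna : ‖a‖ = (norm2 v)⁻¹ := by
          rw [ha, norm_inv, RCLike.norm_ofReal, abs_of_pos hp]
        have hw : (a • v) ∈ {x : Fin n → 𝕜 | norm2 x = 1} := by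
          show norm2 (a • v) = 1
          rw [norm2_smul, hna]
          field_simp
        have h1 : norm2 (D.mulVec (a • v)) ≤ K := hmax hw
        rw [Matrix.mulVec_smul, norm2_smul, hna] at h1
        have h2 := mul_le_mul_of_nonneg_right h1 hp.le
        calc norm2 (D.mulVec v) = (norm2 v)⁻¹ * norm2 (D.mulVec v) * norm2 v := by
              field_simp
          _ ≤ K * norm2 v := h2
    refine ⟨c / (K + 1), by positivity, ?_⟩
    intro v hv T hT
    refine ⟨0, Matrix.mulVec_zero D, ?_⟩
    rw [add_zero]
    have hv' : M.mulVec v = 0 := by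
      show (A * D).mulVec v = 0
      rw [← Matrix.mulVec_mulVec]
      exact hv
    have hkey := key v hv' T hT
    have hb := hbound v
    have hnv : 0 ≤ norm2 v := norm2_nonneg v
    have hnD : 0 ≤ norm2 (D.mulVec v) := norm2_nonneg _
    have he : c / (K + 1) * (K + 1) = c := by field_simp
    nlinarith [mul_le_mul_of_nonneg_left hb (le_of_lt (show (0:ℝ) < c / (K+1) by positivity)),
      mul_nonneg (le_of_lt (show (0:ℝ) < c / (K+1) by positivity)) hnv]
  · -- kernel trivial
    have hker : ∀ v : Fin n → 𝕜, M.mulVec v = 0 → v = 0 := by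
      intro v hv
      by_contra h0
      apply hne
      have hp := norm2_pos h0
      refine ⟨((norm2 v : ℝ) : 𝕜)⁻¹ • v, ?_, ?_⟩
      · show norm2 (((norm2 v : ℝ) : 𝕜)⁻¹ • v) = 1
        rw [norm2_smul, norm_inv, RCLike.norm_ofReal, abs_of_pos hp]
        field_simp
      · show M.mulVec (((norm2 v : ℝ) : 𝕜)⁻¹ • v) = 0
        rw [Matrix.mulVec_smul, hv, smul_zero]
    constructor
    · refine ⟨1, one_pos, fun v hv T _ => ?_⟩
      have hv0 := hker v hv
      subst hv0
      simp [norm2_zero, restr_zero, norm1_zero]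
    · refine ⟨1, one_pos, fun v hv T _ => ⟨0, Matrix.mulVec_zero D, ?_⟩⟩
      have hv0 := hker v (by show (A * D).mulVec v = 0; rw [← Matrix.mulVec_mulVec]; exact hv)
      subst hv0
      simp [Matrix.mulVec_zero, norm2_zero, restr_zero, norm1_zero]
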